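/- Let U ∈ ℝ^{n×n} be orthogonal (UᵀU = I), let Λ = diag(τ₁, …, τ_n) with all τ_i ≥ 0, let α ≥ 0, let Θ ∈ ℝ^{p×p} be symmetric positive definite, let B₀, E ∈ ℝ^{n×p}, and set X = UB₀ + E. Then the function B ↦ tr(Θ(X − UB)ᵀ(X − UB)) + α·tr(BᵀΛB) on ℝ^{n×p} has a unique minimizer B̂, and the error matrix W = B₀ − B̂ satisfies the estimating equation WΘ + αΛW = αΛB₀ − UᵀEΘ. -/

import Mathlib

open Matrix


theorem expand_aux (n p : ℕ) (U : Matrix (Fin n) (Fin n) ℝ) (hU : Uᵀ * U = 1)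
    (Θ : Matrix (Fin p) (Fin p) ℝ) (hΘs : Θᵀ = Θ)
    (Λ : Matrix (Fin n) (Fin n) ℝ) (hΛs : Λᵀ = Λ) (α : ℝ)
    (X Bhat C : Matrix (Fin n) (Fin p) ℝ) :
    (Θ * (X - U*(Bhat + C))ᵀ * (X - U*(Bhat + C))).trace + α * ((Bhat + C)ᵀ * Λ * (Bhat + C)).trace
    = ((Θ * (X - U*Bhat)ᵀ * (X - U*Bhat)).trace + α * (Bhatᵀ * Λ * Bhat).trace)
      + ((Θ * Cᵀ * C).trace + α * (Cᵀ * Λ * C).trace)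
      + 2 * ((Cᵀ * (Bhat*Θ + α • (Λ*Bhat) - Uᵀ*X*Θ)).trace) := by
  have hUU : ∀ M : Matrix (Fin n) (Fin p) ℝ, Uᵀ * (U * M) = M := fun M => by
    rw [← Matrix.mul_assoc, hU, Matrix.one_mul]
  set R := X - U*Bhat with hR
  have hUR : Uᵀ * R = Uᵀ*X - Bhat := by rw [hR, Matrix.mul_sub, hUU]
  have hsub : X - U*(Bhat + C) = R - U*C := by rw [Matrix.mul_add, hR]; abel
  rw [hsub]
  have e1 : Θ * (R - U*C)ᵀ * (R - U*C)
      = Θ*Rᵀ*R - Θ*Rᵀ*(U*C) - Θ*(U*C)ᵀ*R + Θ*(U*C)ᵀ*(U*C) := by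
    rw [transpose_sub]
    simp only [Matrix.mul_sub, Matrix.sub_mul]
    abel
  have e2 : (Bhat + C)ᵀ * Λ * (Bhat + C)
      = Bhatᵀ*Λ*Bhat + Bhatᵀ*Λ*C + Cᵀ*Λ*Bhat + Cᵀ*Λ*C := by
    rw [transpose_add]
    simp only [Matrix.add_mul, Matrix.mul_add]
    abel
  rw [e1, e2]
  have a1 : (Θ*(U*C)ᵀ*(U*C)).trace = (Θ*Cᵀ*C).trace := by
    simp only [transpose_mul, Matrix.mul_assoc, hUU]
  have b1 : (Θ*(U*C)ᵀ*R).trace = (Cᵀ*(Uᵀ*(X*Θ))).trace - (Cᵀ*(Bhat*Θ)).trace := by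
    rw [transpose_mul]
    simp only [Matrix.mul_assoc]
    rw [trace_mul_comm, hUR]
    simp only [Matrix.sub_mul, Matrix.mul_sub, trace_sub, Matrix.mul_assoc]
  have c1 : (Θ*Rᵀ*(U*C)).trace = (Cᵀ*(Uᵀ*(X*Θ))).trace - (Cᵀ*(Bhat*Θ)).trace := by
    rw [← trace_transpose]
    simp only [transpose_mul, transpose_transpose, hΘs, Matrix.mul_assoc]
    rw [← Matrix.mul_assoc Uᵀ R Θ, hUR]
    simp only [Matrix.sub_mul, Matrix.mul_sub, trace_sub, Matrix.mul_assoc]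
  have d1 : (Bhatᵀ*Λ*C).trace = (Cᵀ*(Λ*Bhat)).trace := by
    rw [← trace_transpose]
    simp only [transpose_mul, transpose_transpose, hΛs, Matrix.mul_assoc]
  have d2 : (Cᵀ*Λ*Bhat).trace = (Cᵀ*(Λ*Bhat)).trace := by
    rw [Matrix.mul_assoc]
  have rhs1 : (Cᵀ * (Bhat*Θ + α • (Λ*Bhat) - Uᵀ*X*Θ)).trace
      = (Cᵀ*(Bhat*Θ)).trace + α * (Cᵀ*(Λ*Bhat)).trace - (Cᵀ*(Uᵀ*(X*Θ))).trace := by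
    simp only [Matrix.mul_add, Matrix.mul_sub, Matrix.mul_smul, trace_add, trace_sub, trace_smul,
      Matrix.mul_assoc, smul_eq_mul]
  simp only [trace_add, trace_sub, a1, b1, c1, d1, d2, rhs1]
  ring


theorem qpos (n p : ℕ) (Θ : Matrix (Fin p) (Fin p) ℝ) (hΘ : Θ.PosDef)
    (D : Matrix (Fin n) (Fin p) ℝ) :
    0 ≤ (Θ * Dᵀ * D).trace ∧ (D ≠ 0 → 0 < (Θ * Dᵀ * D).trace) := by
  rw [trace_mul_cycle]
  have diag : ∀ i, (D * Θ * Dᵀ) i i = (D i) ⬝ᵥ (Θ *ᵥ (D i)) := by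
    intro i
    simp only [Matrix.mul_apply, Matrix.mulVec, dotProduct, transpose_apply, Finset.sum_mul,
      Finset.mul_sum]
    rw [Finset.sum_comm]
    apply Finset.sum_congr rfl; intro j _
    apply Finset.sum_congr rfl; intro k _
    ring
  have hnn : ∀ i, 0 ≤ (D * Θ * Dᵀ) i i := by
    intro i
    rw [diag]
    have := hΘ.posSemidef.dotProduct_mulVec_nonneg (D i)
    simpa using this
  constructor
  · exact Finset.sum_nonneg fun i _ => hnn i
  · intro hD
    have : ∃ i, D i ≠ 0 := by
      by_contra h
      push_neg at h
      exact hD (by ext i j; simp [h i])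
    obtain ⟨i, hi⟩ := this
    have hpos : 0 < (D * Θ * Dᵀ) i i := by
      rw [diag]
      have := hΘ.dotProduct_mulVec_pos hi
      simpa using this
    exact Finset.sum_pos' (fun j _ => hnn j) ⟨i, Finset.mem_univ i, hpos⟩

theorem qlam (n p : ℕ) (τ : Fin n → ℝ) (hτ : ∀ i, 0 ≤ τ i)
    (D : Matrix (Fin n) (Fin p) ℝ) :
    0 ≤ (Dᵀ * Matrix.diagonal τ * D).trace := by
  have : ∀ j, 0 ≤ (Dᵀ * Matrix.diagonal τ * D) j j := by
    intro j
    rw [Matrix.mul_apply]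
    apply Finset.sum_nonneg
    intro i _
    rw [Matrix.mul_apply]
    have : ∀ k, Dᵀ j k * Matrix.diagonal τ k i = if k = i then D k j * τ k else 0 := by
      intro k
      by_cases h : k = i <;> simp [Matrix.diagonal_apply, h, mul_comm]
    rw [Finset.sum_congr rfl fun k _ => this k, Finset.sum_ite_eq' Finset.univ i (fun k => D k j * τ k)]
    simp only [Finset.mem_univ, if_true]
    have := mul_nonneg (mul_self_nonneg (D i j)) (hτ i)
    nlinarith [mul_self_nonneg (D i j), hτ i]
  exact Finset.sum_nonneg fun j _ => this j


theorem posdef_add_smul_one (p : ℕ) (Θ : Matrix (Fin p) (Fin p) ℝ) (hΘ : Θ.PosDef)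
    (c : ℝ) (hc : 0 ≤ c) : (Θ + c • 1).PosDef := by
  refine posDef_iff_dotProduct_mulVec.mpr ⟨?_, ?_⟩
  · have h1 : (Θ + c • 1)ᴴ = Θᴴ + c • (1:Matrix (Fin p) (Fin p) ℝ)ᴴ := by
      simp [conjTranspose_add, conjTranspose_smul]
    rw [Matrix.IsHermitian, h1, hΘ.1.eq, conjTranspose_one]
  · intro x hx
    have h2 : (Θ + c • 1) *ᵥ x = Θ *ᵥ x + c • x := by
      rw [Matrix.add_mulVec, Matrix.smul_mulVec, Matrix.one_mulVec]
    rw [h2, dotProduct_add]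
    have h3 : 0 < star x ⬝ᵥ (Θ *ᵥ x) := hΘ.dotProduct_mulVec_pos hx
    have h4 : 0 ≤ star x ⬝ᵥ (c • x) := by
      rw [dotProduct_smul]
      have : (0:ℝ) ≤ star x ⬝ᵥ x := by
        simp [dotProduct]
        exact Finset.sum_nonneg fun i _ => mul_self_nonneg _
      exact smul_nonneg hc this
    linarith

theorem exists_stationary (n p : ℕ) (τ : Fin n → ℝ) (hτ : ∀ i, 0 ≤ τ i) (α : ℝ) (hα : 0 ≤ α)
    (Θ : Matrix (Fin p) (Fin p) ℝ) (hΘ : Θ.PosDef) (S : Matrix (Fin n) (Fin p) ℝ) :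
    ∃ Bhat : Matrix (Fin n) (Fin p) ℝ,
      Bhat * Θ + α • (Matrix.diagonal τ * Bhat) = S * Θ := by
  set M : Fin n → Matrix (Fin p) (Fin p) ℝ := fun i => Θ + (α * τ i) • 1 with hM
  have hMpd : ∀ i, (M i).PosDef := fun i =>
    posdef_add_smul_one p Θ hΘ _ (mul_nonneg hα (hτ i))
  have hMinv : ∀ i, (M i)⁻¹ * (M i) = 1 := fun i =>
    Matrix.nonsing_inv_mul _ (Matrix.isUnit_iff_isUnit_det _ |>.1 (hMpd i).isUnit)
  refine ⟨Matrix.of fun i => ((S i) ᵥ* Θ) ᵥ* (M i)⁻¹, ?_⟩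
  have key : ∀ i, (((S i) ᵥ* Θ) ᵥ* (M i)⁻¹) ᵥ* (M i) = (S i) ᵥ* Θ := fun i => by
    rw [Matrix.vecMul_vecMul, hMinv, Matrix.vecMul_one]
  ext i j
  have hkey := congrFun (key i) j
  have expand : ((((S i) ᵥ* Θ) ᵥ* (M i)⁻¹) ᵥ* (M i)) j
      = ((((S i) ᵥ* Θ) ᵥ* (M i)⁻¹) ᵥ* Θ) j + (α * τ i) * ((((S i) ᵥ* Θ) ᵥ* (M i)⁻¹)) j := by
    rw [hM]
    simp only [Matrix.vecMul_add]
    have : (((S i) ᵥ* Θ) ᵥ* (M i)⁻¹) ᵥ* ((α * τ i) • (1:Matrix (Fin p) (Fin p) ℝ))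
        = (α * τ i) • (((S i) ᵥ* Θ) ᵥ* (M i)⁻¹) := by
      funext k
      simp only [Matrix.vecMul, dotProduct, Matrix.smul_apply, Matrix.one_apply, smul_eq_mul,
        mul_ite, mul_one, mul_zero, Finset.sum_ite_eq', Finset.mem_univ, if_true, Pi.smul_apply,
        Matrix.mul_apply, Finset.mul_sum, Finset.sum_mul]
      apply Finset.sum_congr rfl; intro a _
      apply Finset.sum_congr rfl; intro b _
      ring
    rw [this]
    simp
    exact Or.inl rfl
  have lhs1 : (Matrix.of (fun i => ((S i) ᵥ* Θ) ᵥ* (M i)⁻¹) * Θ) i j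
      = ((((S i) ᵥ* Θ) ᵥ* (M i)⁻¹) ᵥ* Θ) j := by
    rw [Matrix.mul_apply_eq_vecMul]; rfl
  have rhs1 : (S * Θ) i j = ((S i) ᵥ* Θ) j := by
    rw [Matrix.mul_apply_eq_vecMul]
  simp only [Matrix.add_apply, Matrix.smul_apply, Matrix.diagonal_mul, lhs1, rhs1, smul_eq_mul,
    Matrix.of_apply]
  rw [← hkey, expand]
  ring


theorem weighted_ridge_minimizer_error_equation
    (n p : ℕ) (U : Matrix (Fin n) (Fin n) ℝ) (hU : Uᵀ * U = 1)
    (τ : Fin n → ℝ) (hτ : ∀ i, 0 ≤ τ i) (α : ℝ) (hα : 0 ≤ α)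
    (Θ : Matrix (Fin p) (Fin p) ℝ) (hΘ : Θ.PosDef)
    (B₀ E : Matrix (Fin n) (Fin p) ℝ) :
    let X : Matrix (Fin n) (Fin p) ℝ := U * B₀ + E
    let Λ : Matrix (Fin n) (Fin n) ℝ := Matrix.diagonal τ
    let g : Matrix (Fin n) (Fin p) ℝ → ℝ := fun B =>
      (Θ * (X - U * B)ᵀ * (X - U * B)).trace + α * (Bᵀ * Λ * B).trace
    ∃ Bhat : Matrix (Fin n) (Fin p) ℝ,
      (∀ B, g Bhat ≤ g B) ∧
      (∀ B', (∀ B, g B' ≤ g B) → B' = Bhat) ∧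
      (B₀ - Bhat) * Θ + α • (Λ * (B₀ - Bhat)) = α • (Λ * B₀) - Uᵀ * E * Θ := by
  intro X Λ g
  have hΘs : Θᵀ = Θ := by
    have := hΘ.1
    simpa [Matrix.IsHermitian] using this
  have hΛs : Λᵀ = Λ := Matrix.diagonal_transpose τ
  obtain ⟨Bhat, hstat0⟩ := exists_stationary n p τ hτ α hα Θ hΘ (Uᵀ * X)
  have hstat : Bhat * Θ + α • (Λ * Bhat) = Uᵀ * X * Θ := hstat0
  have hL : Bhat * Θ + α • (Λ * Bhat) - Uᵀ * X * Θ = 0 := by rw [hstat]; simp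
  have hgB : ∀ B, g B = g Bhat +
      ((Θ * (B - Bhat)ᵀ * (B - Bhat)).trace + α * ((B - Bhat)ᵀ * Λ * (B - Bhat)).trace) := by
    intro B
    have e := expand_aux n p U hU Θ hΘs Λ hΛs α X Bhat (B - Bhat)
    rw [show Bhat + (B - Bhat) = B from by abel, hL, Matrix.mul_zero, trace_zero] at e
    have e2 : g B = (g Bhat + ((Θ * (B - Bhat)ᵀ * (B - Bhat)).trace
        + α * ((B - Bhat)ᵀ * Λ * (B - Bhat)).trace)) + 2 * 0 := e
    simpa using e2
  have hqnn : ∀ C : Matrix (Fin n) (Fin p) ℝ,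
      0 ≤ (Θ * Cᵀ * C).trace + α * (Cᵀ * Λ * C).trace := by
    intro C
    have h1 := (qpos n p Θ hΘ C).1
    have h2 := mul_nonneg hα (qlam n p τ hτ C)
    linarith
  refine ⟨Bhat, ?_, ?_, ?_⟩
  · intro B
    have := hqnn (B - Bhat)
    rw [hgB B]
    linarith
  · intro B' hmin
    by_contra hne
    have hsub : B' - Bhat ≠ 0 := sub_ne_zero.2 hne
    have h1 := (qpos n p Θ hΘ (B' - Bhat)).2 hsub
    have h2 := mul_nonneg hα (qlam n p τ hτ (B' - Bhat))
    have h3 := hmin Bhat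
    rw [hgB B'] at h3
    linarith
  · have hX : Uᵀ * X = B₀ + Uᵀ * E := by
      show Uᵀ * (U * B₀ + E) = B₀ + Uᵀ * E
      rw [Matrix.mul_add, ← Matrix.mul_assoc, hU, Matrix.one_mul]
    have h2 : Bhat * Θ + α • (Λ * Bhat) = B₀ * Θ + Uᵀ * E * Θ := by
      rw [hstat, hX, Matrix.add_mul]
    calc (B₀ - Bhat) * Θ + α • (Λ * (B₀ - Bhat))
        = (B₀ * Θ + α • (Λ * B₀)) - (Bhat * Θ + α • (Λ * Bhat)) := by
          rw [Matrix.sub_mul, Matrix.mul_sub, smul_sub]; abel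
      _ = (B₀ * Θ + α • (Λ * B₀)) - (B₀ * Θ + Uᵀ * E * Θ) := by rw [h2]
      _ = α • (Λ * B₀) - Uᵀ * E * Θ := by abel
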